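/- For every σ ∈ (0,1) there exists δ₀ > 0 such that for every symmetric P ∈ ℝ^{n×n} with ‖P − P*‖_F < δ₀: the matrix 𝒜(P) = A − B R⁻¹ Bᵀ P is Hurwitz, and the unique symmetric solution P' of the Lyapunov equation 𝒜(P)ᵀP' + P'𝒜(P) = −(Q + P B R⁻¹ Bᵀ P) satisfies ‖P' − P*‖_F ≤ σ‖P − P*‖_F. -/

import Mathlib

open Matrix MeasureTheory Filter NormedSpace
open scoped Kronecker

noncomputable section

/-- A real square matrix is Hurwitz if every eigenvalue over `ℂ` has negative real part. -/
def IsHurwitz {n : Type*} [Fintype n] [DecidableEq n] (X : Matrix n n ℝ) : Prop :=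
  ∀ μ ∈ spectrum ℂ (X.map (algebraMap ℝ ℂ)), μ.re < 0

/-- The Frobenius norm of a real matrix. -/
def frobNorm {p q : Type*} [Fintype p] [Fintype q] (X : Matrix p q ℝ) : ℝ :=
  Real.sqrt (∑ i, ∑ j, (X i j) ^ 2)

/-- The spectral (ℓ²-operator) norm of a real matrix. -/
def spec2Norm {p q : Type*} [Fintype p] [Fintype q] [DecidableEq q] (X : Matrix p q ℝ) : ℝ :=
  ‖LinearMap.toContinuousLinearMap (Matrix.toEuclideanLin X)‖

section AuxComplex

open Polynomial

lemma spectrum_transpose_eq {n : ℕ} (M : Matrix (Fin n) (Fin n) ℂ) :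
    spectrum ℂ Mᵀ = spectrum ℂ M := by
  ext k
  simp only [spectrum.mem_iff, not_iff_not]
  have h : algebraMap ℂ (Matrix (Fin n) (Fin n) ℂ) k - Mᵀ
      = (algebraMap ℂ (Matrix (Fin n) (Fin n) ℂ) k - M)ᵀ := by
    rw [Algebra.algebraMap_eq_smul_one, transpose_sub, transpose_smul, transpose_one]
  rw [h, Matrix.isUnit_transpose]

lemma eval_charpoly_eq {n : ℕ} (M : Matrix (Fin n) (Fin n) ℂ) (t : ℂ) :
    (M.charpoly).eval t = (t • (1 : Matrix (Fin n) (Fin n) ℂ) - M).det := by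
  rw [Matrix.charpoly, _root_.eval_det, matPolyEquiv_charmatrix]
  rw [Polynomial.eval_sub, Polynomial.eval_X, Polynomial.eval_C]
  congr 1
  rw [Matrix.scalar_apply, Matrix.smul_one_eq_diagonal]

lemma sylvester_inj {n : ℕ} (hn : 0 < n) (X : Matrix (Fin n) (Fin n) ℝ)
    (hX : ∀ μ ∈ spectrum ℂ (X.map (algebraMap ℝ ℂ)), μ.re < 0)
    (E : Matrix (Fin n) (Fin n) ℝ) (hE : Xᵀ * E + E * X = 0) : E = 0 := by
  set Xc := X.map (algebraMap ℝ ℂ) with hXc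
  set Ec := E.map (algebraMap ℝ ℂ) with hEc
  have hmap : Xcᵀ * Ec + Ec * Xc = 0 := by
    have h0 := congrArg ((algebraMap ℝ ℂ).mapMatrix) hE
    simp only [_root_.map_add, _root_.map_mul, map_zero, RingHom.mapMatrix_apply] at h0
    rw [Matrix.transpose_map] at h0
    exact h0
  have hstep : Xcᵀ * Ec = Ec * (-Xc) := by
    rw [mul_neg]
    exact eq_neg_of_add_eq_zero_left hmap
  have hpow : ∀ k : ℕ, Xcᵀ ^ k * Ec = Ec * (-Xc) ^ k := by
    intro k
    induction k with
    | zero => simp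
    | succ k ih =>
        rw [pow_succ, pow_succ, mul_assoc, hstep, ← mul_assoc, ih, mul_assoc]
  have haeval : ∀ p : ℂ[X], (aeval Xcᵀ) p * Ec = Ec * (aeval (-Xc)) p := by
    intro p
    induction p using Polynomial.induction_on' with
    | add p q hp hq =>
        simp only [_root_.map_add]
        rw [add_mul, mul_add, hp, hq]
    | monomial k a =>
        rw [aeval_monomial, aeval_monomial, mul_assoc, hpow k, ← mul_assoc, ← mul_assoc,
          ← Algebra.commutes]
  have hCH := haeval ((-Xc).charpoly)
  rw [Matrix.aeval_self_charpoly, mul_zero] at hCH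
  have hdeg : 0 < ((-Xc).charpoly).degree := by
    rw [Matrix.charpoly_degree_eq_dim, Fintype.card_fin]
    exact_mod_cast hn
  have hunit : IsUnit ((aeval Xcᵀ) ((-Xc).charpoly)) := by
    by_contra hnu
    have h0 : (0 : ℂ) ∈ spectrum ℂ ((aeval Xcᵀ) ((-Xc).charpoly)) :=
      (spectrum.zero_mem_iff ℂ).mpr hnu
    rw [spectrum.map_polynomial_aeval_of_degree_pos Xcᵀ _ hdeg] at h0
    obtain ⟨lam, hlam, hev⟩ := h0
    rw [spectrum_transpose_eq] at hlam
    have hlt : lam.re < 0 := hX lam hlam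
    have hdet : (lam • (1 : Matrix (Fin n) (Fin n) ℂ) - (-Xc)).det = 0 := by
      rw [← eval_charpoly_eq]; exact hev
    have hmem : (-lam) ∈ spectrum ℂ Xc := by
      rw [spectrum.mem_iff, Algebra.algebraMap_eq_smul_one]
      intro hu
      have heq : lam • (1 : Matrix (Fin n) (Fin n) ℂ) - (-Xc)
          = -((-lam) • (1 : Matrix (Fin n) (Fin n) ℂ) - Xc) := by
        rw [neg_smul]; abel
      have hu2 : IsUnit (lam • (1 : Matrix (Fin n) (Fin n) ℂ) - (-Xc)) := by
        rw [heq]; exact hu.neg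
      have := (Matrix.isUnit_iff_isUnit_det _).mp hu2
      rw [hdet] at this
      exact (not_isUnit_zero : ¬IsUnit (0 : ℂ)) this
    have := hX _ hmem
    simp only [Complex.neg_re] at this
    linarith
  rw [hunit.mul_right_eq_zero] at hCH
  ext i j
  have h1 := congrArg (fun M : Matrix (Fin n) (Fin n) ℂ => M i j) hCH
  simp only [hEc, Matrix.map_apply, Matrix.zero_apply] at h1
  have h2 : ((E i j : ℝ) : ℂ) = 0 := h1
  exact_mod_cast h2

section Hurw

attribute [local instance] Matrix.linftyOpNormedRing Matrix.linftyOpNormedAlgebra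

-- entrywise bound gives linfty-op-norm bound
lemma linfty_norm_le_of_entries {n : ℕ} (A : Matrix (Fin n) (Fin n) ℂ) {a : ℝ} (ha : 0 ≤ a)
    (h : ∀ i j, ‖A i j‖ ≤ a) : ‖A‖ ≤ n * a := by
  rw [Matrix.linfty_opNorm_def]
  have hsum : (Finset.univ.sup fun i : Fin n => ∑ j, ‖A i j‖₊) ≤ (n : NNReal) * a.toNNReal := by
    refine Finset.sup_le fun i _ => ?_
    calc ∑ j, ‖A i j‖₊ ≤ ∑ _j : Fin n, a.toNNReal :=
          Finset.sum_le_sum fun j _ => by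
            rw [← NNReal.coe_le_coe, coe_nnnorm, Real.coe_toNNReal _ ha]
            exact h i j
      _ = (n : NNReal) * a.toNNReal := by
          simp [Finset.sum_const, Finset.card_univ, mul_comm]
  calc ((Finset.univ.sup fun i : Fin n => ∑ j, ‖A i j‖₊ : NNReal) : ℝ)
      ≤ (((n : NNReal) * a.toNNReal : NNReal) : ℝ) := by exact_mod_cast hsum
    _ = n * a := by push_cast [Real.coe_toNNReal _ ha]; ring

lemma hurwitz_perturb {n : ℕ} (hn : 0 < n) (M : Matrix (Fin n) (Fin n) ℂ)
    (hM : ∀ μ ∈ spectrum ℂ M, μ.re < 0) :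
    ∃ ε > 0, ∀ N : Matrix (Fin n) (Fin n) ℂ, (∀ i j, ‖N i j - M i j‖ ≤ ε) →
      ∀ μ ∈ spectrum ℂ N, μ.re < 0 := by
  haveI : Nonempty (Fin n) := ⟨⟨0, hn⟩⟩
  set r : ℝ := ‖M‖ + 1 with hr
  set S : Set ℂ := {μ | 0 ≤ μ.re} ∩ Metric.closedBall 0 r with hS
  have hSc : IsCompact S :=
    (isCompact_closedBall (0:ℂ) r).inter_left (isClosed_le continuous_const Complex.continuous_re)
  have hunit : ∀ μ ∈ S, IsUnit (μ • (1 : Matrix (Fin n) (Fin n) ℂ) - M) := by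
    intro μ hμ
    by_contra h
    have hmem : μ ∈ spectrum ℂ M := by
      rw [spectrum.mem_iff, Algebra.algebraMap_eq_smul_one]; exact h
    exact absurd (hM μ hmem) (not_lt.2 hμ.1)
  have hcont : ContinuousOn
      (fun μ : ℂ => Ring.inverse (μ • (1 : Matrix (Fin n) (Fin n) ℂ) - M)) S := by
    intro μ hμ
    have h1 : ContinuousAt (fun μ : ℂ => μ • (1 : Matrix (Fin n) (Fin n) ℂ) - M) μ :=
      ((continuous_id.smul continuous_const).sub continuous_const).continuousAt
    have h2 : ContinuousAt Ring.inverse (μ • (1 : Matrix (Fin n) (Fin n) ℂ) - M) := by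
      have := NormedRing.inverse_continuousAt (hunit μ hμ).unit
      rwa [IsUnit.unit_spec] at this
    exact (ContinuousAt.comp (g := Ring.inverse) (f := fun μ : ℂ => μ • (1 : Matrix (Fin n) (Fin n) ℂ) - M) (x := μ) h2 h1).continuousWithinAt
  obtain ⟨C, hC⟩ := hSc.exists_bound_of_continuousOn hcont
  set C' : ℝ := max C 1 with hC'
  have hC'1 : (1 : ℝ) ≤ C' := le_max_right _ _
  have hC'0 : (0 : ℝ) < C' := lt_of_lt_of_le one_pos hC'1
  refine ⟨1 / (2 * n * C'), by positivity, ?_⟩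
  intro N hN μ hμ
  by_contra hre
  push_neg at hre
  have hNM : ‖N - M‖ ≤ 1 / (2 * C') := by
    have hb := linfty_norm_le_of_entries (N - M) (a := 1 / (2 * n * C')) (by positivity)
      (fun i j => hN i j)
    calc ‖N - M‖ ≤ n * (1 / (2 * n * C')) := hb
      _ = 1 / (2 * C') := by
          field_simp
  have hNMlt1 : ‖N - M‖ ≤ 1 := by
    refine hNM.trans ?_
    rw [div_le_one (by positivity)]
    linarith
  have hμS : μ ∈ S := by
    constructor
    · exact hre
    · rw [Metric.mem_closedBall, dist_zero_right]
      have h1 : ‖μ‖ ≤ ‖N‖ := spectrum.norm_le_norm_of_mem hμ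
      have h2 : ‖N‖ ≤ ‖M‖ + ‖N - M‖ := by
        have : N = M + (N - M) := by abel
        calc ‖N‖ = ‖M + (N - M)‖ := by rw [← this]
          _ ≤ ‖M‖ + ‖N - M‖ := norm_add_le _ _
      linarith [hNMlt1]
  set u := (hunit μ hμS).unit with hu
  have huval : (u : Matrix (Fin n) (Fin n) ℂ) = μ • (1 : Matrix (Fin n) (Fin n) ℂ) - M :=
    IsUnit.unit_spec _
  have hinv : ‖((u⁻¹ : (Matrix (Fin n) (Fin n) ℂ)ˣ) : Matrix (Fin n) (Fin n) ℂ)‖ ≤ C' := by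
    have h1 := hC _ hμS
    rw [← huval, Ring.inverse_unit] at h1
    exact h1.trans (le_max_left _ _)
  have hsmall : ‖((u⁻¹ : (Matrix (Fin n) (Fin n) ℂ)ˣ) : Matrix (Fin n) (Fin n) ℂ) * (N - M)‖ < 1 := by
    calc ‖((u⁻¹ : (Matrix (Fin n) (Fin n) ℂ)ˣ) : Matrix (Fin n) (Fin n) ℂ) * (N - M)‖
        ≤ ‖((u⁻¹ : (Matrix (Fin n) (Fin n) ℂ)ˣ) : Matrix (Fin n) (Fin n) ℂ)‖ * ‖N - M‖ :=
          norm_mul_le _ _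
      _ ≤ C' * (1 / (2 * C')) := by
          apply mul_le_mul hinv hNM (norm_nonneg _) (le_of_lt hC'0)
      _ = 1 / 2 := by
          field_simp
      _ < 1 := by norm_num
  have hkey : μ • (1 : Matrix (Fin n) (Fin n) ℂ) - N
      = (u : Matrix (Fin n) (Fin n) ℂ) *
        (1 - ((u⁻¹ : (Matrix (Fin n) (Fin n) ℂ)ˣ) : Matrix (Fin n) (Fin n) ℂ) * (N - M)) := by
    rw [mul_sub, mul_one, ← mul_assoc, Units.mul_inv, one_mul, huval]
    abel
  have hunitN : IsUnit (μ • (1 : Matrix (Fin n) (Fin n) ℂ) - N) := by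
    rw [hkey]
    exact u.isUnit.mul (Units.isUnit (Units.oneSub _ hsmall))
  rw [spectrum.mem_iff, Algebra.algebraMap_eq_smul_one] at hμ
  exact hμ hunitN

end Hurw


end AuxComplex

attribute [local instance] Matrix.normedAddCommGroup Matrix.normedSpace

section MainHelpers

variable {n : ℕ}

lemma frobNorm_nonneg (X : Matrix (Fin n) (Fin n) ℝ) : 0 ≤ frobNorm X :=
  Real.sqrt_nonneg _

lemma norm_le_frobNorm (X : Matrix (Fin n) (Fin n) ℝ) : ‖X‖ ≤ frobNorm X := by
  refine (Matrix.norm_le_iff (frobNorm_nonneg X)).mpr fun i j => ?_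
  have h1 : ‖X i j‖ = Real.sqrt ((X i j) ^ 2) := by
    rw [Real.sqrt_sq_eq_abs, Real.norm_eq_abs]
  rw [h1, frobNorm]
  apply Real.sqrt_le_sqrt
  calc (X i j) ^ 2 ≤ ∑ j', (X i j') ^ 2 :=
        Finset.single_le_sum (f := fun j' => X i j' ^ 2) (fun j' _ => sq_nonneg _) (Finset.mem_univ j)
    _ ≤ ∑ i', ∑ j', (X i' j') ^ 2 :=
        Finset.single_le_sum (f := fun i' => ∑ j', X i' j' ^ 2) (fun i' _ => Finset.sum_nonneg fun j' _ => sq_nonneg _)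
          (Finset.mem_univ i)

lemma frobNorm_le_norm (X : Matrix (Fin n) (Fin n) ℝ) : frobNorm X ≤ n * ‖X‖ := by
  rw [frobNorm]
  have h1 : ∑ i, ∑ j, (X i j) ^ 2 ≤ (n * ‖X‖) ^ 2 := by
    calc ∑ i, ∑ j, (X i j) ^ 2 ≤ ∑ _i : Fin n, ∑ _j : Fin n, ‖X‖ ^ 2 := by
          refine Finset.sum_le_sum fun i _ => Finset.sum_le_sum fun j _ => ?_
          have h2 : ‖X i j‖ ≤ ‖X‖ := Matrix.norm_entry_le_entrywise_sup_norm X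
          calc (X i j) ^ 2 = ‖X i j‖ ^ 2 := by rw [Real.norm_eq_abs, sq_abs]
            _ ≤ ‖X‖ ^ 2 := by gcongr
      _ = (n * ‖X‖) ^ 2 := by
          simp [Finset.sum_const, Finset.card_univ]
          ring
  calc Real.sqrt (∑ i, ∑ j, (X i j) ^ 2) ≤ Real.sqrt ((n * ‖X‖) ^ 2) := Real.sqrt_le_sqrt h1
    _ = n * ‖X‖ := Real.sqrt_sq (by positivity)

lemma norm_mul_le_card (M N : Matrix (Fin n) (Fin n) ℝ) : ‖M * N‖ ≤ n * ‖M‖ * ‖N‖ := by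
  refine (Matrix.norm_le_iff (by positivity)).mpr fun i j => ?_
  rw [Matrix.mul_apply]
  calc ‖∑ k, M i k * N k j‖ ≤ ∑ k, ‖M i k * N k j‖ := norm_sum_le _ _
    _ ≤ ∑ _k : Fin n, ‖M‖ * ‖N‖ := by
        refine Finset.sum_le_sum fun k _ => ?_
        rw [norm_mul]
        exact mul_le_mul (Matrix.norm_entry_le_entrywise_sup_norm M)
          (Matrix.norm_entry_le_entrywise_sup_norm N) (norm_nonneg _) (norm_nonneg _)
    _ = n * ‖M‖ * ‖N‖ := by
        simp [Finset.sum_const, Finset.card_univ]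
        ring

end MainHelpers

/-- local exponential stability of the exact Kleinman iteration at `P*`. -/
theorem kleinman_local_exponential_stability
    (n m : ℕ) (hn : 0 < n) (hm : 0 < m)
    (A : Matrix (Fin n) (Fin n) ℝ) (B : Matrix (Fin n) (Fin m) ℝ)
    (Q : Matrix (Fin n) (Fin n) ℝ) (R : Matrix (Fin m) (Fin m) ℝ)
    (hQ : Q.PosSemidef) (hR : R.PosDef)
    (Pstar : Matrix (Fin n) (Fin n) ℝ) (hPstar : Pstar.PosDef)
    (hARE : Aᵀ * Pstar + Pstar * A - Pstar * B * R⁻¹ * Bᵀ * Pstar + Q = 0)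
    (hAstar : IsHurwitz (A - B * R⁻¹ * Bᵀ * Pstar))
    (σ : ℝ) (hσ0 : 0 < σ) (hσ1 : σ < 1) :
    ∃ δ₀ > 0, ∀ P : Matrix (Fin n) (Fin n) ℝ, P.IsSymm → frobNorm (P - Pstar) < δ₀ →
      IsHurwitz (A - B * R⁻¹ * Bᵀ * P) ∧
      ∀ P' : Matrix (Fin n) (Fin n) ℝ, P'.IsSymm →
        (A - B * R⁻¹ * Bᵀ * P)ᵀ * P' + P' * (A - B * R⁻¹ * Bᵀ * P)
            = -(Q + P * B * R⁻¹ * Bᵀ * P) →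
        frobNorm (P' - Pstar) ≤ σ * frobNorm (P - Pstar) := by
  classical
  -- symmetry facts
  have hRsym : Rᵀ = R := by
    rw [← Matrix.conjTranspose_eq_transpose_of_trivial]; exact hR.1
  have hRinv : (R⁻¹)ᵀ = R⁻¹ := by rw [Matrix.transpose_nonsing_inv, hRsym]
  have hPsT : Pstarᵀ = Pstar := by
    rw [← Matrix.conjTranspose_eq_transpose_of_trivial]; exact hPstar.1
  have hKsym : (B * R⁻¹ * Bᵀ)ᵀ = B * R⁻¹ * Bᵀ := by
    simp [Matrix.transpose_mul, Matrix.transpose_transpose, hRinv, Matrix.mul_assoc]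
  have htrP : ∀ (Y : Matrix (Fin n) (Fin n) ℝ), Yᵀ = Y →
      (A - B * R⁻¹ * Bᵀ * Y)ᵀ = Aᵀ - Y * (B * R⁻¹ * Bᵀ) := by
    intro Y hY
    rw [Matrix.transpose_sub, Matrix.transpose_mul, hKsym, hY]
  -- the Lyapunov linear operator at Pstar
  set L : Matrix (Fin n) (Fin n) ℝ →ₗ[ℝ] Matrix (Fin n) (Fin n) ℝ :=
    { toFun := fun E => (A - B * R⁻¹ * Bᵀ * Pstar)ᵀ * E + E * (A - B * R⁻¹ * Bᵀ * Pstar)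
      map_add' := fun E F => by noncomm_ring
      map_smul' := fun c E => by
        simp [Matrix.mul_smul, Matrix.smul_mul, smul_add] } with hLdef
  have hLapp : ∀ E, L E = (A - B * R⁻¹ * Bᵀ * Pstar)ᵀ * E + E * (A - B * R⁻¹ * Bᵀ * Pstar) :=
    fun E => rfl
  have hLinj : Function.Injective L := by
    intro E F hEF
    have h0 : L (E - F) = 0 := by rw [map_sub, hEF, sub_self]
    rw [hLapp] at h0
    exact sub_eq_zero.mp (sylvester_inj hn _ hAstar (E - F) h0)
  let e : Matrix (Fin n) (Fin n) ℝ ≃ₗ[ℝ] Matrix (Fin n) (Fin n) ℝ :=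
    LinearEquiv.ofBijective L ⟨hLinj, LinearMap.injective_iff_surjective.mp hLinj⟩
  obtain ⟨c₀, hc₀, hc₀b⟩ := SemilinearMapClass.bound_of_continuous
    (e.symm : Matrix (Fin n) (Fin n) ℝ →ₗ[ℝ] Matrix (Fin n) (Fin n) ℝ)
    (LinearMap.continuous_of_finiteDimensional _)
  have hEb : ∀ Em : Matrix (Fin n) (Fin n) ℝ, ‖Em‖ ≤ c₀ * ‖L Em‖ := by
    intro Em
    have h1 := hc₀b (L Em)
    have h2 : (e.symm : Matrix (Fin n) (Fin n) ℝ →ₗ[ℝ] Matrix (Fin n) (Fin n) ℝ) (L Em) = Em := by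
      show e.symm (e Em) = Em
      exact e.symm_apply_apply Em
    rwa [h2] at h1
  -- constants
  set K : Matrix (Fin n) (Fin n) ℝ := B * R⁻¹ * Bᵀ with hKdef
  set kc : ℝ := n * ‖K‖ + 1 with hkc
  have hkc0 : 0 < kc := by positivity
  have hKbound : ∀ M : Matrix (Fin n) (Fin n) ℝ, ‖K * M‖ ≤ kc * ‖M‖ := by
    intro M
    calc ‖K * M‖ ≤ n * ‖K‖ * ‖M‖ := norm_mul_le_card _ _
      _ ≤ kc * ‖M‖ := by
          apply mul_le_mul_of_nonneg_right _ (norm_nonneg _)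
          rw [hkc]; linarith
  have hKbound' : ∀ M : Matrix (Fin n) (Fin n) ℝ, ‖M * K‖ ≤ kc * ‖M‖ := by
    intro M
    calc ‖M * K‖ ≤ n * ‖M‖ * ‖K‖ := norm_mul_le_card _ _
      _ ≤ kc * ‖M‖ := by nlinarith [norm_nonneg M, norm_nonneg K]
  -- Hurwitz stability radius
  obtain ⟨ε, hε, hεball⟩ := hurwitz_perturb hn
    ((A - B * R⁻¹ * Bᵀ * Pstar).map (algebraMap ℝ ℂ)) hAstar
  set c₃ : ℝ := c₀ * n * kc + 1 with hc₃
  have hc₃0 : 0 < c₃ := by positivity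
  set δ₀ : ℝ := min (min (σ / (2 * n * c₃ + 1)) (1 / (4 * c₃))) (ε / kc) with hδ₀
  have hδ₀0 : 0 < δ₀ := by
    apply lt_min (lt_min _ _) _ <;> positivity
  refine ⟨δ₀, hδ₀0, fun P hPsym hPfrob => ?_⟩
  have hΔnorm : ‖P - Pstar‖ < δ₀ := lt_of_le_of_lt (norm_le_frobNorm _) hPfrob
  have hΔnn : 0 ≤ ‖P - Pstar‖ := norm_nonneg _
  constructor
  · -- Hurwitz part
    intro μ hμ
    refine hεball _ ?_ μ hμ
    intro i j
    have hdiff : (A - B * R⁻¹ * Bᵀ * P) - (A - B * R⁻¹ * Bᵀ * Pstar) = K * (Pstar - P) := by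
      rw [hKdef]; noncomm_ring
    have hentry : ((A - B * R⁻¹ * Bᵀ * P).map (algebraMap ℝ ℂ)) i j
        - ((A - B * R⁻¹ * Bᵀ * Pstar).map (algebraMap ℝ ℂ)) i j
        = (((K * (Pstar - P)) i j : ℝ) : ℂ) := by
      rw [← hdiff]
      simp [Matrix.map_apply, Matrix.sub_apply]
    rw [hentry, Complex.norm_real]
    calc ‖(K * (Pstar - P)) i j‖ ≤ ‖K * (Pstar - P)‖ :=
          Matrix.norm_entry_le_entrywise_sup_norm _
      _ ≤ kc * ‖Pstar - P‖ := hKbound _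
      _ = kc * ‖P - Pstar‖ := by rw [norm_sub_rev]
      _ ≤ kc * δ₀ := mul_le_mul_of_nonneg_left (le_of_lt hΔnorm) (le_of_lt hkc0)
      _ ≤ kc * (ε / kc) := by
          apply mul_le_mul_of_nonneg_left _ (le_of_lt hkc0)
          exact min_le_right _ _
      _ = ε := by field_simp
  · -- contraction part
    intro P' hP'sym heq
    have h2 : (Aᵀ - P * K) * P' + P' * (A - K * P) = -(Q + P * B * R⁻¹ * Bᵀ * P) := by
      rw [← htrP P hPsym]; exact heq
    have hkey : (Aᵀ - Pstar * K) * (P' - Pstar) + (P' - Pstar) * (A - K * Pstar)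
        = -((P - Pstar) * (K * (P - Pstar)))
          + ((P - Pstar) * (K * (P' - Pstar)) + ((P' - Pstar) * K) * (P - Pstar)) := by
      rw [hKdef] at h2 ⊢
      rw [← sub_eq_zero]
      have expand : (Aᵀ - Pstar * (B * R⁻¹ * Bᵀ)) * (P' - Pstar)
            + (P' - Pstar) * (A - B * R⁻¹ * Bᵀ * Pstar)
            - (-((P - Pstar) * ((B * R⁻¹ * Bᵀ) * (P - Pstar)))
              + ((P - Pstar) * ((B * R⁻¹ * Bᵀ) * (P' - Pstar))
                + ((P' - Pstar) * (B * R⁻¹ * Bᵀ)) * (P - Pstar)))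
          = ((Aᵀ - P * (B * R⁻¹ * Bᵀ)) * P' + P' * (A - (B * R⁻¹ * Bᵀ) * P)
              - (-(Q + P * B * R⁻¹ * Bᵀ * P)))
            - (Aᵀ * Pstar + Pstar * A - Pstar * B * R⁻¹ * Bᵀ * Pstar + Q) := by
        simp only [Matrix.mul_sub, Matrix.sub_mul, Matrix.mul_add, Matrix.add_mul,
          Matrix.mul_assoc, neg_add_rev, neg_neg, neg_sub, sub_eq_add_neg, neg_add,
          Matrix.neg_mul, Matrix.mul_neg]
        abel
      rw [expand, h2, hARE]
      simp
    have hLval : L (P' - Pstar)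
        = -((P - Pstar) * (K * (P - Pstar)))
          + ((P - Pstar) * (K * (P' - Pstar)) + ((P' - Pstar) * K) * (P - Pstar)) := by
      rw [hLapp, htrP Pstar hPsT]
      exact hkey
    set d : ℝ := ‖P - Pstar‖ with hd
    set a : ℝ := ‖P' - Pstar‖ with ha
    have hann : 0 ≤ a := norm_nonneg _
    have hbound1 : ‖L (P' - Pstar)‖ ≤ n * kc * d ^ 2 + 2 * (n * kc * d * a) := by
      rw [hLval]
      have t1 : ‖(P - Pstar) * (K * (P - Pstar))‖ ≤ n * kc * d ^ 2 := by
        calc ‖(P - Pstar) * (K * (P - Pstar))‖ ≤ n * ‖P - Pstar‖ * ‖K * (P - Pstar)‖ :=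
              norm_mul_le_card _ _
          _ ≤ n * d * (kc * d) := by
              apply mul_le_mul_of_nonneg_left (hKbound _) (by positivity)
          _ = n * kc * d ^ 2 := by ring
      have t2 : ‖(P - Pstar) * (K * (P' - Pstar))‖ ≤ n * kc * d * a := by
        calc ‖(P - Pstar) * (K * (P' - Pstar))‖ ≤ n * ‖P - Pstar‖ * ‖K * (P' - Pstar)‖ :=
              norm_mul_le_card _ _
          _ ≤ n * d * (kc * a) := by
              apply mul_le_mul_of_nonneg_left (hKbound _) (by positivity)
          _ = n * kc * d * a := by ring
      have t3 : ‖((P' - Pstar) * K) * (P - Pstar)‖ ≤ n * kc * d * a := by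
        have h7 := hKbound' (P' - Pstar)
        rw [← ha] at h7
        calc ‖((P' - Pstar) * K) * (P - Pstar)‖ ≤ n * ‖(P' - Pstar) * K‖ * ‖P - Pstar‖ :=
              norm_mul_le_card _ _
          _ ≤ n * (kc * a) * d := by
              rw [← hd]
              exact mul_le_mul_of_nonneg_right
                (mul_le_mul_of_nonneg_left h7 (Nat.cast_nonneg n)) hΔnn
          _ = n * kc * d * a := by ring
      calc ‖-((P - Pstar) * (K * (P - Pstar)))
            + ((P - Pstar) * (K * (P' - Pstar)) + ((P' - Pstar) * K) * (P - Pstar))‖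
          ≤ ‖(P - Pstar) * (K * (P - Pstar))‖
            + (‖(P - Pstar) * (K * (P' - Pstar))‖ + ‖((P' - Pstar) * K) * (P - Pstar)‖) := by
            refine (norm_add_le _ _).trans ?_
            rw [norm_neg]
            exact add_le_add (le_refl _) (norm_add_le _ _)
        _ ≤ n * kc * d ^ 2 + 2 * (n * kc * d * a) := by linarith
    have h3 : a ≤ c₀ * ‖L (P' - Pstar)‖ := by
      have := hEb (P' - Pstar)
      rwa [← ha] at this
    have harith : a ≤ c₀ * (n * kc * d ^ 2 + 2 * (n * kc * d * a)) :=
      h3.trans (mul_le_mul_of_nonneg_left hbound1 hc₀.le)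
    have hd1 : d ≤ 1 / (4 * c₃) := by
      have h8 : δ₀ ≤ 1 / (4 * c₃) := by
        rw [hδ₀]; exact le_trans (min_le_left _ _) (min_le_right _ _)
      linarith
    have hd2 : d ≤ σ / (2 * n * c₃ + 1) := by
      have h8 : δ₀ ≤ σ / (2 * n * c₃ + 1) := by
        rw [hδ₀]; exact le_trans (min_le_left _ _) (min_le_left _ _)
      linarith
    have hfa : frobNorm (P' - Pstar) ≤ n * a := frobNorm_le_norm _
    have hfd : d ≤ frobNorm (P - Pstar) := norm_le_frobNorm _
    have hfdnn : 0 ≤ frobNorm (P - Pstar) := frobNorm_nonneg _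
    have hnn : (0:ℝ) ≤ n := Nat.cast_nonneg n
    clear_value d a kc c₃ δ₀
    clear hLval hbound1 h3 hΔnorm hPfrob heq h2 hkey hεball hEb hc₀b hLdef hLapp
    clear e hLinj
    clear L hKbound hKbound' htrP
    have hmain : a ≤ c₃ * (d ^ 2 + 2 * d * a) := by
      have h5 : c₀ * (n * kc * d ^ 2 + 2 * (n * kc * d * a)) ≤ c₃ * (d ^ 2 + 2 * d * a) := by
        rw [hc₃]
        have hda : 0 ≤ d * a := mul_nonneg hΔnn hann
        have hd2' : 0 ≤ d ^ 2 := sq_nonneg d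
        ring_nf
        nlinarith [hda, hd2']
      linarith
    have hfinal : a ≤ 2 * c₃ * d ^ 2 := by
      have h6 : c₃ * (2 * d * a) ≤ a / 2 := by
        have h9 : c₃ * (2 * d) ≤ 1 / 2 := by
          calc c₃ * (2 * d) ≤ c₃ * (2 * (1 / (4 * c₃))) := by
                apply mul_le_mul_of_nonneg_left _ hc₃0.le
                linarith
            _ = 1 / 2 := by
                field_simp
                ring
        have h10 := mul_le_mul_of_nonneg_right h9 hann
        linarith [h10]
      linarith [hmain, h6]
    have hdσ : 2 * n * c₃ * d ≤ σ := by
      have h9 : 0 < 2 * (n : ℝ) * c₃ + 1 := by positivity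
      rw [le_div_iff₀ h9] at hd2
      have h10 : 0 ≤ 2 * (n:ℝ) * c₃ * d := by positivity
      linarith only [hd2, hΔnn]
    calc frobNorm (P' - Pstar) ≤ n * a := hfa
      _ ≤ n * (2 * c₃ * d ^ 2) := mul_le_mul_of_nonneg_left hfinal hnn
      _ = (2 * n * c₃ * d) * d := by ring
      _ ≤ σ * d := mul_le_mul_of_nonneg_right hdσ hΔnn
      _ ≤ σ * frobNorm (P - Pstar) := mul_le_mul_of_nonneg_left hfd hσ0.le
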